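/- (Monotone OSSS inequality) Let Ω = {0,1}^I for finite I with a product of Bernoulli measures, f : Ω → [0,1] nondecreasing, and T an algorithm determining f. Then Var(f) ≤ 2 Σ_{i∈I} δ_i(T)·Cov(ω_i, f). -/

import Mathlib

set_option linter.unusedSectionVars false
set_option linter.unreachableTactic false
set_option linter.unusedTactic false
set_option maxHeartbeats 1000000

open MeasureTheory ProbabilityTheory ENNReal

/-- The Bernoulli(`p`) measure on `{0,1}`. -/
noncomputable def bern (p : ℝ≥0∞) : Measure Bool :=
  p • Measure.dirac true + (1 - p) • Measure.dirac false

/-- A decision tree over the product space `Π i, Ω i`: at each internal node it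
queries a coordinate and branches on its value; leaves carry the output. -/
inductive DTree (I : Type*) (Ω : I → Type*) (α : Type*) where
  | leaf : α → DTree I Ω α
  | node : (i : I) → ((Ω i) → DTree I Ω α) → DTree I Ω α

/-- The output computed by a decision tree on the input `ω`. -/
def DTree.eval {I : Type*} {Ω : I → Type*} {α : Type*} :
    DTree I Ω α → (∀ i, Ω i) → α
  | .leaf a, _ => a
  | .node i c, ω => (c (ω i)).eval ω

/-- The set of coordinates revealed (queried) by the tree on the input `ω`. -/
def DTree.revealed {I : Type*} {Ω : I → Type*} {α : Type*} :
    DTree I Ω α → (∀ i, Ω i) → Set I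
  | .leaf _, _ => ∅
  | .node i c, ω => insert i ((c (ω i)).revealed ω)

namespace OSSSAux

variable {I : Type*} [Fintype I] [DecidableEq I]

/-! ### Combinatorial product Bernoulli weights -/

/-- weight of a configuration under product Bernoulli with success probability `q i` -/
def W (q : I → ℝ) (x : I → Bool) : ℝ := ∏ i, (if x i then q i else 1 - q i)

/-- expectation with respect to the weights `W q` -/
def Ex (q : I → ℝ) (g : (I → Bool) → ℝ) : ℝ := ∑ x, W q x * g x

lemma W_nonneg {q : I → ℝ} (hq0 : ∀ i, 0 ≤ q i) (hq1 : ∀ i, q i ≤ 1) (x : I → Bool) :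
    0 ≤ W q x := by
  refine Finset.prod_nonneg fun i _ => ?_
  split <;> [exact hq0 i; linarith [hq1 i]]

lemma W_eq_mul (q : I → ℝ) (j : I) (x : I → Bool) :
    W q x = (if x j then q j else 1 - q j) *
      ∏ i ∈ Finset.univ.erase j, (if x i then q i else 1 - q i) := by
  rw [W, ← Finset.mul_prod_erase Finset.univ _ (Finset.mem_univ j)]

lemma W_update (q : I → ℝ) (j : I) (t : ℝ) (x : I → Bool) :
    W (Function.update q j t) x = (if x j then t else 1 - t) *
      ∏ i ∈ Finset.univ.erase j, (if x i then q i else 1 - q i) := by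
  rw [W_eq_mul _ j]
  simp only [Function.update_self]
  congr 1
  refine Finset.prod_congr rfl fun i hi => ?_
  rw [Function.update_of_ne (Finset.ne_of_mem_erase hi)]

/-- pointwise pinning decomposition of the weights at coordinate `j` -/
lemma W_pin (q : I → ℝ) (j : I) (x : I → Bool) :
    W q x = q j * W (Function.update q j 1) x + (1 - q j) * W (Function.update q j 0) x := by
  rw [W_eq_mul q j, W_update, W_update]
  cases h : x j <;> simp <;> ring

lemma sum_W_update_eq (q : I → ℝ) (j : I) (g : (I → Bool) → ℝ)
    (hg : ∀ x b, g (Function.update x j b) = g x) :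
    ∑ x, W (Function.update q j 1) x * g x = ∑ x, W (Function.update q j 0) x * g x := by
  have hσ : Function.Bijective (fun x : I → Bool => Function.update x j (! x j)) := by
    have hinv : Function.Involutive (fun x : I → Bool => Function.update x j (! x j)) := by
      intro x; funext i
      by_cases h : i = j <;> simp [h, Function.update_of_ne]
    exact hinv.bijective
  rw [← Fintype.sum_bijective _ hσ _ _ (fun x => ?_)]
  rw [W_update, W_update, hg]
  congr 2
  · cases h : x j <;> simp [h]
  · refine Finset.prod_congr rfl fun i hi => ?_
    rw [Function.update_of_ne (Finset.ne_of_mem_erase hi)]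

/-- if `g` doesn't depend on coordinate `j`, pinning the measure there doesn't matter -/
lemma Ex_update (q : I → ℝ) (j : I) (t : ℝ) (g : (I → Bool) → ℝ)
    (hg : ∀ x b, g (Function.update x j b) = g x) :
    Ex (Function.update q j t) g = Ex q g := by
  have key : ∀ q' : I → ℝ, Ex q' g = ∑ x, W (Function.update q' j 1) x * g x := by
    intro q'
    have h1 : Ex q' g = q' j * (∑ x, W (Function.update q' j 1) x * g x)
        + (1 - q' j) * (∑ x, W (Function.update q' j 0) x * g x) := by
      rw [Ex, Finset.mul_sum, Finset.mul_sum, ← Finset.sum_add_distrib]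
      refine Finset.sum_congr rfl fun x _ => ?_
      rw [W_pin q' j x]; ring
    rw [h1, ← sum_W_update_eq q' j g hg]; ring
  rw [key, key q, Function.update_idem]

/-- total mass is 1 (for arbitrary `q : I → ℝ`) -/
lemma W_sum (q : I → ℝ) : ∑ x, W q x = 1 := by
  have h := Finset.prod_univ_sum (fun _ : I => (Finset.univ : Finset Bool))
    (fun i b => if b then q i else 1 - q i)
  rw [Fintype.piFinset_univ] at h
  calc ∑ x : I → Bool, W q x
      = ∏ i : I, ∑ b : Bool, (if b then q i else 1 - q i) := by
        rw [h]; rfl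
    _ = 1 := by
        refine Finset.prod_eq_one fun i _ => ?_
        rw [Fintype.sum_bool]; simp

/-- pinned pointwise substitution -/
lemma W_pin_subst' (q : I → ℝ) (j : I) (b : Bool) (g h : (I → Bool) → ℝ)
    (hgh : ∀ x, x j = b → g x = h x) (x : I → Bool) :
    W (Function.update q j (if b then 1 else 0)) x * g x
      = W (Function.update q j (if b then 1 else 0)) x * h x := by
  by_cases hx : x j = b
  · rw [hgh x hx]
  · have : W (Function.update q j (if b then 1 else 0)) x = 0 := by
      rw [W_update]
      cases hb : x j <;> cases b <;> simp_all
    simp [this]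

/-- the conditioning workhorse: conditioning on the value of coordinate `j` -/
lemma condX (q : I → ℝ) (j : I) (G : Bool → (I → Bool) → ℝ)
    (hG : ∀ b x c, G b (Function.update x j c) = G b x) :
    ∑ x, W q x * G (x j) x
      = q j * ∑ x, W q x * G true x + (1 - q j) * ∑ x, W q x * G false x := by
  have hb : ∀ b : Bool, ∑ x, W (Function.update q j (if b then 1 else 0)) x * G (x j) x
      = ∑ x, W q x * G b x := by
    intro b
    have h1 : ∀ x, W (Function.update q j (if b then 1 else 0)) x * G (x j) x
        = W (Function.update q j (if b then 1 else 0)) x * G b x := by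
      intro x
      exact W_pin_subst' q j b (fun z => G (z j) z) (fun z => G b z)
        (fun z hz => by show G (z j) z = G b z; rw [hz]) x
    rw [Finset.sum_congr rfl fun x _ => h1 x]
    exact Ex_update q j (if b then (1:ℝ) else 0) (G b) (fun x c => hG b x c)
  calc ∑ x, W q x * G (x j) x
      = ∑ x, (q j * (W (Function.update q j 1) x * G (x j) x)
          + (1 - q j) * (W (Function.update q j 0) x * G (x j) x)) := by
        refine Finset.sum_congr rfl fun x _ => ?_
        rw [W_pin q j x]; ring
    _ = q j * ∑ x, W (Function.update q j 1) x * G (x j) x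
          + (1 - q j) * ∑ x, W (Function.update q j 0) x * G (x j) x := by
        rw [Finset.sum_add_distrib, Finset.mul_sum, Finset.mul_sum]
    _ = _ := by
        have h1 := hb true; have h0 := hb false
        norm_num at h1 h0
        rw [h1, h0]

/-- integrate out a function of a single coordinate -/
lemma sum_coord (q : I → ℝ) (j : I) (H : Bool → ℝ) :
    ∑ y, W q y * H (y j) = q j * H true + (1 - q j) * H false := by
  have h := condX q j (fun b _ => H b) (fun _ _ _ => rfl)
  rw [h, ← Finset.sum_mul, ← Finset.sum_mul, W_sum]; ring

/-- change of variables: replacing coordinate `j` of `x` by a fresh sample `y j` -/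
lemma changeVar (q : I → ℝ) (j : I) (Ψ : (I → Bool) → (I → Bool) → ℝ)
    (hΨ : ∀ z y c, Ψ z (Function.update y j c) = Ψ z y) :
    ∑ x, W q x * ∑ y, W q y * Ψ (Function.update x j (y j)) y
      = ∑ x, W q x * ∑ y, W q y * Ψ x y := by
  have swap : ∀ Φ : (I → Bool) → (I → Bool) → ℝ,
      ∑ x, W q x * ∑ y, W q y * Φ x y = ∑ y, W q y * ∑ x, W q x * Φ x y := by
    intro Φ
    simp_rw [Finset.mul_sum]
    rw [Finset.sum_comm]
    refine Finset.sum_congr rfl fun y _ => Finset.sum_congr rfl fun x _ => by ring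
  rw [swap (fun x y => Ψ (Function.update x j (y j)) y), swap Ψ]
  have hy : ∑ y, W q y * ∑ x, W q x * Ψ (Function.update x j (y j)) y
      = q j * ∑ y, W q y * ∑ x, W q x * Ψ (Function.update x j true) y
        + (1 - q j) * ∑ y, W q y * ∑ x, W q x * Ψ (Function.update x j false) y :=
    condX q j (fun b y => ∑ x, W q x * Ψ (Function.update x j b) y)
      (fun b y c => Finset.sum_congr rfl fun x _ => by
        show W q x * Ψ (Function.update x j b) (Function.update y j c)
          = W q x * Ψ (Function.update x j b) y
        rw [hΨ])
  rw [hy]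
  have hthis : ∀ y : I → Bool, ∑ x, W q x * Ψ x y
      = q j * ∑ x, W q x * Ψ (Function.update x j true) y
        + (1 - q j) * ∑ x, W q x * Ψ (Function.update x j false) y := by
    intro y
    have hx : ∑ x, W q x * Ψ (Function.update x j (x j)) y
        = q j * ∑ x, W q x * Ψ (Function.update x j true) y
          + (1 - q j) * ∑ x, W q x * Ψ (Function.update x j false) y :=
      condX q j (fun b x => Ψ (Function.update x j b) y)
        (fun b x c => by
          show Ψ (Function.update (Function.update x j c) j b) y
            = Ψ (Function.update x j b) y
          rw [Function.update_idem])
    rw [← hx]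
    refine Finset.sum_congr rfl fun x _ => ?_
    rw [Function.update_eq_self]
  simp_rw [hthis]
  rw [Finset.mul_sum, Finset.mul_sum, ← Finset.sum_add_distrib]
  refine Finset.sum_congr rfl fun y _ => ?_
  ring

/-! ### Decision trees over boolean inputs -/

abbrev BTree (I : Type*) := DTree I (fun _ => Bool) ℝ

/-- size of a boolean decision tree -/
def size : BTree I → ℕ
  | .leaf _ => 0
  | .node _ c => 1 + size (c true) + size (c false)

/-- tree with all queries of coordinate `j` replaced by the branch for `b` -/
def subst (j : I) (b : Bool) : BTree I → BTree I
  | .leaf a => .leaf a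
  | .node k c => if k = j then subst j b (c b)
      else .node k (fun v => subst j b (c v))

/-- revealed set as a Finset -/
def revF : BTree I → (I → Bool) → Finset I
  | .leaf _, _ => ∅
  | .node k c, x => insert k (revF (c (x k)) x)

lemma mem_revF {T : BTree I} {x : I → Bool} {i : I} :
    i ∈ revF T x ↔ i ∈ T.revealed x := by
  induction T with
  | leaf a => simp [revF, DTree.revealed]
  | node k c ih => simp [revF, DTree.revealed, ih]

lemma size_subst (j : I) (b : Bool) (T : BTree I) : size (subst j b T) ≤ size T := by
  induction T with
  | leaf a => simp [subst, size]
  | node k c ih =>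
    by_cases h : k = j
    · subst h
      simp only [subst, if_pos rfl]
      have := ih b
      cases b <;> simp [size] <;> omega
    · simp only [subst, if_neg h, size]
      have h1 := ih true; have h2 := ih false
      omega

lemma eval_subst (j : I) (b : Bool) (T : BTree I) (x : I → Bool) :
    (subst j b T).eval x = T.eval (Function.update x j b) := by
  induction T generalizing x with
  | leaf a => simp [subst, DTree.eval]
  | node k c ih =>
    by_cases h : k = j
    · subst h
      simp only [subst, if_pos rfl, DTree.eval, Function.update_self]
      exact ih b x
    · simp only [subst, if_neg h, DTree.eval]
      rw [Function.update_of_ne h]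
      exact ih (x k) x

lemma revF_subst (j : I) (b : Bool) (T : BTree I) (x : I → Bool) :
    revF (subst j b T) x = (revF T (Function.update x j b)).erase j := by
  induction T generalizing x with
  | leaf a => simp [subst, revF]
  | node k c ih =>
    by_cases h : k = j
    · subst h
      simp only [subst, if_true, eq_self_iff_true, revF, Function.update_self]
      rw [ih b x, Finset.erase_insert_eq_erase]
    · simp only [subst, if_neg h, revF]
      rw [Function.update_of_ne h]
      rw [ih (x k) x]
      rw [Finset.erase_insert_of_ne h]

/-- the hybrid configuration: `y` on the coordinates revealed by the run on `x`,
and `x` elsewhere -/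
def hyb (T : BTree I) (x y : I → Bool) : I → Bool :=
  fun i => if i ∈ revF T x then y i else x i

lemma hyb_leaf (a : ℝ) (x y : I → Bool) : hyb (DTree.leaf a) x y = x := by
  funext i; simp [hyb, revF]

lemma hyb_yupd (j : I) (b : Bool) (T : BTree I) (z y : I → Bool) (c : Bool) :
    hyb (subst j b T) z (Function.update y j c) = hyb (subst j b T) z y := by
  funext i
  simp only [hyb]
  split
  · next hmem =>
    have hij : i ≠ j := by
      intro h; subst h
      rw [revF_subst] at hmem
      exact (Finset.notMem_erase i _) hmem
    rw [Function.update_of_ne hij]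
  · rfl

/-- recursive description of the hybrid -/
lemma hyb_node (j : I) (c : Bool → BTree I) (x y : I → Bool) :
    hyb (DTree.node j c) x y
      = hyb (subst j (x j) (c (x j))) (Function.update x j (y j)) y := by
  funext i
  by_cases hij : i = j
  · subst hij
    have h1 : i ∈ revF (DTree.node i c) x := by simp [revF]
    have h2 : i ∉ revF (subst i (x i) (c (x i))) (Function.update x i (y i)) := by
      rw [revF_subst]; exact Finset.notMem_erase i _
    simp only [hyb, if_pos h1, if_neg h2, Function.update_self]
  · have hx : Function.update (Function.update x j (y j)) j (x j) = x := by
      rw [Function.update_idem, Function.update_eq_self]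
    have hcond : i ∈ revF (subst j (x j) (c (x j))) (Function.update x j (y j))
        ↔ i ∈ revF (DTree.node j c) x := by
      rw [revF_subst, hx, Finset.mem_erase]
      simp only [revF, Finset.mem_insert]
      constructor
      · rintro ⟨-, h⟩; exact Or.inr h
      · rintro (h | h); · exact absurd h hij
        · exact ⟨hij, h⟩
    simp only [hyb]
    by_cases hm : i ∈ revF (DTree.node j c) x
    · rw [if_pos hm, if_pos (hcond.mpr hm)]
    · rw [if_neg hm, if_neg (fun h => hm (hcond.mp h)), Function.update_of_ne hij]

/-! ### Lemma A : the hybrid is a fresh sample, independent of `eval T x` -/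

lemma lemA : ∀ (n : ℕ) (T : BTree I), size T ≤ n → ∀ (q : I → ℝ) (g : (I → Bool) → ℝ),
    ∑ x, W q x * (T.eval x * ∑ y, W q y * g (hyb T x y)) = Ex q T.eval * Ex q g := by
  intro n
  induction n with
  | zero =>
    intro T hT q g
    match T with
    | .leaf a =>
      simp only [hyb_leaf, DTree.eval]
      have h1 : ∀ x : I → Bool, ∑ y, W q y * g x = g x := by
        intro x; rw [← Finset.sum_mul, W_sum, one_mul]
      calc ∑ x, W q x * (a * ∑ y, W q y * g x)
          = a * ∑ x, W q x * g x := by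
            rw [Finset.mul_sum]
            exact Finset.sum_congr rfl fun x _ => by rw [h1]; ring
        _ = Ex q (fun _ => a) * Ex q g := by
            rw [Ex, Ex]
            rw [show ∑ x : I → Bool, W q x * a = a from by
              rw [← Finset.sum_mul, W_sum, one_mul]]
    | .node k c => exact absurd hT (by simp [size])
  | succ n ih =>
    intro T hT q g
    match T with
    | .leaf a => exact ih (DTree.leaf a) (by simp [size]) q g
    | .node j c =>
      set Tt := subst j true (c true) with hTt
      set Tf := subst j false (c false) with hTf
      have hsz : ∀ b : Bool, size (subst j b (c b)) ≤ n := by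
        intro b
        have h1 : size (subst j b (c b)) ≤ size (c b) := size_subst j b (c b)
        have h2 : size (DTree.node j c) = 1 + size (c true) + size (c false) := rfl
        cases b <;> omega
      have key : ∀ b : Bool, ∑ x, W q x *
            ∑ y, W q y * ((subst j b (c b)).eval (Function.update x j (y j)) *
              g (hyb (subst j b (c b)) (Function.update x j (y j)) y))
          = Ex q (subst j b (c b)).eval * Ex q g := by
        intro b
        have hcv := changeVar q j
          (fun z y => (subst j b (c b)).eval z * g (hyb (subst j b (c b)) z y))
          (fun z y cc => by
            show (subst j b (c b)).eval z * g (hyb (subst j b (c b)) z (Function.update y j cc))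
              = (subst j b (c b)).eval z * g (hyb (subst j b (c b)) z y)
            rw [hyb_yupd])
        rw [hcv]
        have := ih (subst j b (c b)) (hsz b) q g
        rw [← this]
        refine Finset.sum_congr rfl fun x _ => ?_
        show W q x * ∑ y, W q y * ((subst j b (c b)).eval x * g (hyb (subst j b (c b)) x y)) = _
        congr 1
        rw [Finset.mul_sum]
        exact Finset.sum_congr rfl fun y _ => by ring
      have hGdef := condX q j (fun b x => ∑ y, W q y *
            ((subst j b (c b)).eval (Function.update x j (y j)) *
              g (hyb (subst j b (c b)) (Function.update x j (y j)) y)))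
        (fun b x cc => by
          show (∑ y, W q y * ((subst j b (c b)).eval
                (Function.update (Function.update x j cc) j (y j)) *
              g (hyb (subst j b (c b)) (Function.update (Function.update x j cc) j (y j)) y)))
            = _
          simp only [Function.update_idem])
      have hpt : ∀ x : I → Bool,
          (DTree.node j c).eval x * ∑ y, W q y * g (hyb (DTree.node j c) x y)
          = ∑ y, W q y * ((subst j (x j) (c (x j))).eval (Function.update x j (y j)) *
              g (hyb (subst j (x j) (c (x j))) (Function.update x j (y j)) y)) := by
        intro x
        rw [Finset.mul_sum]
        refine Finset.sum_congr rfl fun y _ => ?_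
        have he : (subst j (x j) (c (x j))).eval (Function.update x j (y j))
            = (DTree.node j c).eval x := by
          rw [eval_subst, Function.update_idem, Function.update_eq_self]
          rfl
        rw [he, hyb_node]
        ring
      have hevalnode : Ex q (DTree.node j c).eval
          = q j * Ex q Tt.eval + (1 - q j) * Ex q Tf.eval := by
        have h := condX q j (fun b x => (subst j b (c b)).eval x)
          (fun b x cc => by
            show (subst j b (c b)).eval (Function.update x j cc) = (subst j b (c b)).eval x
            rw [eval_subst, eval_subst, Function.update_idem])
        rw [Ex]
        calc ∑ x, W q x * (DTree.node j c).eval x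
            = ∑ x, W q x * (subst j (x j) (c (x j))).eval x := by
              refine Finset.sum_congr rfl fun x _ => ?_
              rw [eval_subst, Function.update_eq_self]
              rfl
          _ = q j * ∑ x, W q x * Tt.eval x + (1 - q j) * ∑ x, W q x * Tf.eval x := h
          _ = _ := rfl
      calc ∑ x, W q x * ((DTree.node j c).eval x * ∑ y, W q y * g (hyb (DTree.node j c) x y))
          = ∑ x, W q x * ∑ y, W q y *
              ((subst j (x j) (c (x j))).eval (Function.update x j (y j)) *
              g (hyb (subst j (x j) (c (x j))) (Function.update x j (y j)) y)) := by
            exact Finset.sum_congr rfl fun x _ => by rw [hpt]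
        _ = q j * (∑ x, W q x * ∑ y, W q y * (Tt.eval (Function.update x j (y j)) *
              g (hyb Tt (Function.update x j (y j)) y)))
            + (1 - q j) * (∑ x, W q x * ∑ y, W q y * (Tf.eval (Function.update x j (y j)) *
              g (hyb Tf (Function.update x j (y j)) y))) := hGdef
        _ = q j * (Ex q Tt.eval * Ex q g) + (1 - q j) * (Ex q Tf.eval * Ex q g) := by
            rw [key true, key false]
        _ = Ex q (DTree.node j c).eval * Ex q g := by rw [hevalnode]; ring

/-! ### Lemma D : the OSSS telescoping bound -/

/-- revealment of coordinate `i` -/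
def dl (q : I → ℝ) (T : BTree I) (i : I) : ℝ :=
  ∑ x, W q x * (if i ∈ revF T x then 1 else 0)

/-- resampling influence of coordinate `i` -/
def infl (q : I → ℝ) (F : (I → Bool) → ℝ) (i : I) : ℝ :=
  ∑ x, W q x * (q i * |F x - F (Function.update x i true)|
    + (1 - q i) * |F x - F (Function.update x i false)|)

variable {q : I → ℝ}

lemma dl_nonneg (hq0 : ∀ i, 0 ≤ q i) (hq1 : ∀ i, q i ≤ 1) (T : BTree I) (i : I) :
    0 ≤ dl q T i :=
  Finset.sum_nonneg fun x _ => mul_nonneg (W_nonneg hq0 hq1 x) (by positivity)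

lemma infl_nonneg (hq0 : ∀ i, 0 ≤ q i) (hq1 : ∀ i, q i ≤ 1) (F : (I → Bool) → ℝ) (i : I) :
    0 ≤ infl q F i := by
  refine Finset.sum_nonneg fun x _ => mul_nonneg (W_nonneg hq0 hq1 x) ?_
  have h1 := hq0 i; have h2 := hq1 i
  have := abs_nonneg (F x - F (Function.update x i true))
  have := abs_nonneg (F x - F (Function.update x i false))
  nlinarith

lemma dl_node_self (j : I) (c : Bool → BTree I) : dl q (DTree.node j c) j = 1 := by
  rw [dl]
  calc ∑ x, W q x * (if j ∈ revF (DTree.node j c) x then 1 else 0)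
      = ∑ x, W q x := by
        refine Finset.sum_congr rfl fun x _ => ?_
        rw [if_pos (by simp [revF])]; ring
    _ = 1 := W_sum q

lemma dl_subst_self (j : I) (b : Bool) (T : BTree I) : dl q (subst j b T) j = 0 := by
  rw [dl]
  refine Finset.sum_eq_zero fun x _ => ?_
  rw [if_neg (by rw [revF_subst]; exact Finset.notMem_erase j _)]
  ring

lemma dl_node_ne (j : I) (c : Bool → BTree I) {i : I} (hij : i ≠ j) :
    dl q (DTree.node j c) i
      = q j * dl q (subst j true (c true)) i
        + (1 - q j) * dl q (subst j false (c false)) i := by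
  have h : ∑ x, W q x * (if i ∈ revF (subst j (x j) (c (x j))) x then (1:ℝ) else 0)
      = q j * ∑ x, W q x * (if i ∈ revF (subst j true (c true)) x then (1:ℝ) else 0)
        + (1 - q j) * ∑ x, W q x * (if i ∈ revF (subst j false (c false)) x then (1:ℝ) else 0) :=
    condX q j (fun b x => if i ∈ revF (subst j b (c b)) x then (1:ℝ) else 0)
      (fun b x cc => by
        show (if i ∈ revF (subst j b (c b)) (Function.update x j cc) then (1:ℝ) else 0)
          = (if i ∈ revF (subst j b (c b)) x then (1:ℝ) else 0)
        rw [revF_subst, revF_subst, Function.update_idem])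
  rw [dl, dl, dl, ← h]
  refine Finset.sum_congr rfl fun x _ => ?_
  congr 1
  have hiff : (i ∈ revF (DTree.node j c) x) ↔ i ∈ revF (subst j (x j) (c (x j))) x := by
    rw [revF_subst, Function.update_eq_self, Finset.mem_erase]
    simp only [revF, Finset.mem_insert]
    constructor
    · rintro (h1 | h1); · exact absurd h1 hij
      · exact ⟨hij, h1⟩
    · rintro ⟨-, h1⟩; exact Or.inr h1
  exact if_congr hiff rfl rfl

lemma lemD (hq0 : ∀ i, 0 ≤ q i) (hq1 : ∀ i, q i ≤ 1) :
    ∀ (n : ℕ) (T : BTree I), size T ≤ n → ∀ (F : (I → Bool) → ℝ),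
    ∑ x, W q x * ∑ y, W q y * |F x - F (hyb T x y)|
      ≤ ∑ i, dl q T i * infl q F i := by
  have leafcase : ∀ (a : ℝ) (F : (I → Bool) → ℝ),
      ∑ x, W q x * ∑ y, W q y * |F x - F (hyb (DTree.leaf a) x y)|
        ≤ ∑ i, dl q (DTree.leaf a : BTree I) i * infl q F i := by
    intro a F
    have h0 : ∑ x, W q x * ∑ y, W q y * |F x - F (hyb (DTree.leaf a) x y)| = 0 := by
      refine Finset.sum_eq_zero fun x _ => ?_
      have hz : ∀ y, |F x - F (hyb (DTree.leaf a) x y)| = 0 := fun y => by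
        rw [hyb_leaf]; simp
      simp [hz]
    rw [h0]
    exact Finset.sum_nonneg fun i _ =>
      mul_nonneg (dl_nonneg hq0 hq1 _ i) (infl_nonneg hq0 hq1 F i)
  intro n
  induction n with
  | zero =>
    intro T hT F
    match T with
    | .leaf a => exact leafcase a F
    | .node k c => exact absurd hT (by simp [size])
  | succ n ih =>
    intro T hT F
    match T with
    | .leaf a => exact leafcase a F
    | .node j c =>
      have hsz : ∀ b : Bool, size (subst j b (c b)) ≤ n := by
        intro b
        have h1 : size (subst j b (c b)) ≤ size (c b) := size_subst j b (c b)
        have h2 : size (DTree.node j c) = 1 + size (c true) + size (c false) := rfl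
        cases b <;> omega
      set S1 : ℝ := ∑ x, W q x * ∑ y, W q y * |F x - F (Function.update x j (y j))| with hS1
      set S2 : ℝ := ∑ x, W q x * ∑ y, W q y *
        |F (Function.update x j (y j)) - F (hyb (DTree.node j c) x y)| with hS2
      have step1 : ∑ x, W q x * ∑ y, W q y * |F x - F (hyb (DTree.node j c) x y)| ≤ S1 + S2 := by
        have hle : ∑ x, W q x * ∑ y, W q y * |F x - F (hyb (DTree.node j c) x y)|
            ≤ ∑ x, W q x * ∑ y, W q y * (|F x - F (Function.update x j (y j))|
              + |F (Function.update x j (y j)) - F (hyb (DTree.node j c) x y)|) := by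
          refine Finset.sum_le_sum fun x _ => ?_
          refine mul_le_mul_of_nonneg_left ?_ (W_nonneg hq0 hq1 x)
          refine Finset.sum_le_sum fun y _ => ?_
          exact mul_le_mul_of_nonneg_left (abs_sub_le _ _ _) (W_nonneg hq0 hq1 y)
        refine hle.trans_eq ?_
        rw [hS1, hS2, ← Finset.sum_add_distrib]
        refine Finset.sum_congr rfl fun x _ => ?_
        rw [← mul_add, ← Finset.sum_add_distrib]
        congr 1
        exact Finset.sum_congr rfl fun y _ => by ring
      have hS1eq : S1 = infl q F j := by
        rw [hS1, infl]
        refine Finset.sum_congr rfl fun x _ => ?_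
        congr 1
        exact sum_coord q j (fun b => |F x - F (Function.update x j b)|)
      have hcv : ∀ b : Bool,
          ∑ x, W q x * ∑ y, W q y *
              |F (Function.update x j (y j)) -
                F (hyb (subst j b (c b)) (Function.update x j (y j)) y)|
            = ∑ x, W q x * ∑ y, W q y * |F x - F (hyb (subst j b (c b)) x y)| := by
        intro b
        exact changeVar q j
          (fun z y => |F z - F (hyb (subst j b (c b)) z y)|)
          (fun z y cc => by
            show |F z - F (hyb (subst j b (c b)) z (Function.update y j cc))|
              = |F z - F (hyb (subst j b (c b)) z y)|
            rw [hyb_yupd])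
      have hcond : S2
          = q j * ∑ x, W q x * ∑ y, W q y *
              |F (Function.update x j (y j)) -
                F (hyb (subst j true (c true)) (Function.update x j (y j)) y)|
            + (1 - q j) * ∑ x, W q x * ∑ y, W q y *
              |F (Function.update x j (y j)) -
                F (hyb (subst j false (c false)) (Function.update x j (y j)) y)| := by
        rw [hS2]
        have h := condX q j (fun b x => ∑ y, W q y *
            |F (Function.update x j (y j)) -
              F (hyb (subst j b (c b)) (Function.update x j (y j)) y)|)
          (fun b x cc => by
            show (∑ y, W q y *
                |F (Function.update (Function.update x j cc) j (y j)) -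
                  F (hyb (subst j b (c b))
                    (Function.update (Function.update x j cc) j (y j)) y)|)
              = _
            simp only [Function.update_idem])
        rw [← h]
        refine Finset.sum_congr rfl fun x _ => ?_
        congr 1
        refine Finset.sum_congr rfl fun y _ => ?_
        rw [hyb_node]
      have hS2le : S2 ≤ q j * ∑ i, dl q (subst j true (c true)) i * infl q F i
          + (1 - q j) * ∑ i, dl q (subst j false (c false)) i * infl q F i := by
        rw [hcond, hcv true, hcv false]
        have h1 := ih (subst j true (c true)) (hsz true) F
        have h2 := ih (subst j false (c false)) (hsz false) F
        have hqj1 : 0 ≤ q j := hq0 j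
        have hqj2 : 0 ≤ 1 - q j := by linarith [hq1 j]
        exact add_le_add (mul_le_mul_of_nonneg_left h1 hqj1)
          (mul_le_mul_of_nonneg_left h2 hqj2)
      have hRHS : ∑ i, dl q (DTree.node j c) i * infl q F i
          = infl q F j + (q j * ∑ i, dl q (subst j true (c true)) i * infl q F i
            + (1 - q j) * ∑ i, dl q (subst j false (c false)) i * infl q F i) := by
        rw [← Finset.add_sum_erase _ _ (Finset.mem_univ j), dl_node_self, one_mul]
        congr 1
        rw [Finset.mul_sum, Finset.mul_sum, ← Finset.sum_add_distrib,
          ← Finset.add_sum_erase _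
            (fun i => q j * (dl q (subst j true (c true)) i * infl q F i)
              + (1 - q j) * (dl q (subst j false (c false)) i * infl q F i))
            (Finset.mem_univ j),
          dl_subst_self, dl_subst_self]
        rw [show q j * (0 * infl q F j) + (1 - q j) * (0 * infl q F j) = 0 from by ring,
          zero_add]
        refine Finset.sum_congr rfl fun i hi => ?_
        rw [dl_node_ne j c (Finset.ne_of_mem_erase hi)]
        ring
      calc ∑ x, W q x * ∑ y, W q y * |F x - F (hyb (DTree.node j c) x y)|
          ≤ S1 + S2 := step1
        _ ≤ infl q F j + (q j * ∑ i, dl q (subst j true (c true)) i * infl q F i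
            + (1 - q j) * ∑ i, dl q (subst j false (c false)) i * infl q F i) := by
            rw [hS1eq]; exact add_le_add (le_refl _) hS2le
        _ = ∑ i, dl q (DTree.node j c) i * infl q F i := hRHS.symm

/-! ### Variance bound -/

lemma varLem (hq0 : ∀ i, 0 ≤ q i) (hq1 : ∀ i, q i ≤ 1)
    (T : BTree I) (f : (I → Bool) → ℝ) (hTf : T.eval = f)
    (hf1 : ∀ x, |f x| ≤ 1) :
    Ex q (fun x => (f x - Ex q f) ^ 2) ≤ ∑ i, dl q T i * infl q f i := by
  set m := Ex q f with hm
  have hvar : Ex q (fun x => (f x - m) ^ 2) = Ex q (fun x => f x * f x) - m * m := by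
    have expand : ∀ x : I → Bool, W q x * (f x - m) ^ 2
        = W q x * (f x * f x) - 2 * m * (W q x * f x) + m * m * W q x := by
      intro x; ring
    simp only [Ex]
    rw [Finset.sum_congr rfl fun x _ => expand x]
    rw [Finset.sum_add_distrib, Finset.sum_sub_distrib, ← Finset.mul_sum, ← Finset.mul_sum,
      W_sum]
    simp only [Ex] at hm
    rw [← hm]
    ring
  have hA : ∑ x, W q x * (f x * ∑ y, W q y * f (hyb T x y)) = m * m := by
    have h := lemA (size T) T le_rfl q f
    rw [hTf] at h
    rw [h, hm]
  have hmain : Ex q (fun x => (f x - m) ^ 2)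
      = ∑ x, W q x * (f x * (f x - ∑ y, W q y * f (hyb T x y))) := by
    rw [hvar, ← hA]
    simp only [Ex]
    rw [← Finset.sum_sub_distrib]
    refine Finset.sum_congr rfl fun x _ => ?_
    have hconst : (∑ y, W q y * f x) = f x := by
      rw [← Finset.sum_mul, W_sum, one_mul]
    ring
  rw [hmain]
  have hstep : ∑ x, W q x * (f x * (f x - ∑ y, W q y * f (hyb T x y)))
      ≤ ∑ x, W q x * ∑ y, W q y * |f x - f (hyb T x y)| := by
    refine Finset.sum_le_sum fun x _ => ?_
    refine mul_le_mul_of_nonneg_left ?_ (W_nonneg hq0 hq1 x)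
    have h1 : f x - ∑ y, W q y * f (hyb T x y) = ∑ y, W q y * (f x - f (hyb T x y)) := by
      simp only [mul_sub]
      rw [Finset.sum_sub_distrib, ← Finset.sum_mul, W_sum, one_mul]
    rw [h1, Finset.mul_sum]
    refine Finset.sum_le_sum fun y _ => ?_
    have hd : f x * (f x - f (hyb T x y)) ≤ |f x - f (hyb T x y)| := by
      set d := f x - f (hyb T x y)
      calc f x * d ≤ |f x * d| := le_abs_self _
        _ = |f x| * |d| := abs_mul _ _
        _ ≤ 1 * |d| := mul_le_mul_of_nonneg_right (hf1 x) (abs_nonneg d)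
        _ = |d| := one_mul _
    calc f x * (W q y * (f x - f (hyb T x y)))
        = W q y * (f x * (f x - f (hyb T x y))) := by ring
      _ ≤ W q y * |f x - f (hyb T x y)| :=
          mul_le_mul_of_nonneg_left hd (W_nonneg hq0 hq1 y)
  exact hstep.trans (lemD hq0 hq1 (size T) T le_rfl f)

/-! ### Influence equals twice the covariance for monotone functions -/

lemma infl_eq_two_cov (f : (I → Bool) → ℝ) (hmono : Monotone f) (i : I) :
    infl q f i = 2 * ((∑ x, W q x * (if x i then f x else 0)) - q i * Ex q f) := by
  have hnabla : ∀ x : I → Bool,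
      0 ≤ f (Function.update x i true) - f (Function.update x i false) := by
    intro x
    have hle : Function.update x i false ≤ Function.update x i true := by
      intro k
      by_cases hk : k = i
      · subst hk; simp [Function.update_self]
      · rw [Function.update_of_ne hk, Function.update_of_ne hk]
    linarith [hmono hle]
  have h1 : infl q f i
      = q i * ∑ x, W q x * ((1 - q i) *
          (f (Function.update x i true) - f (Function.update x i false)))
        + (1 - q i) * ∑ x, W q x * (q i *
          (f (Function.update x i true) - f (Function.update x i false))) := by
    have hc : ∑ x, W q x *
          (q i * |f (Function.update x i (x i)) - f (Function.update x i true)|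
            + (1 - q i) * |f (Function.update x i (x i)) - f (Function.update x i false)|)
        = q i * ∑ x, W q x *
            (q i * |f (Function.update x i true) - f (Function.update x i true)|
              + (1 - q i) * |f (Function.update x i true) - f (Function.update x i false)|)
          + (1 - q i) * ∑ x, W q x *
            (q i * |f (Function.update x i false) - f (Function.update x i true)|
              + (1 - q i) * |f (Function.update x i false) - f (Function.update x i false)|) :=
      condX q i (fun b x => q i * |f (Function.update x i b) - f (Function.update x i true)|
          + (1 - q i) * |f (Function.update x i b) - f (Function.update x i false)|)
        (fun b x c => by
          show q i * |f (Function.update (Function.update x i c) i b)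
              - f (Function.update (Function.update x i c) i true)|
            + (1 - q i) * |f (Function.update (Function.update x i c) i b)
              - f (Function.update (Function.update x i c) i false)| = _
          simp only [Function.update_idem])
    have hL : infl q f i = ∑ x, W q x *
        (q i * |f (Function.update x i (x i)) - f (Function.update x i true)|
          + (1 - q i) * |f (Function.update x i (x i)) - f (Function.update x i false)|) := by
      rw [infl]
      exact Finset.sum_congr rfl fun x _ => by rw [Function.update_eq_self]
    rw [hL, hc]
    congr 1
    · congr 1
      refine Finset.sum_congr rfl fun x _ => ?_
      congr 1
      rw [sub_self, abs_zero, abs_of_nonneg (hnabla x)]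
      ring
    · congr 1
      refine Finset.sum_congr rfl fun x _ => ?_
      congr 1
      rw [sub_self, abs_zero, abs_sub_comm, abs_of_nonneg (hnabla x)]
      ring
  have h2 : (∑ x, W q x * (if x i then f x else 0))
      = q i * ∑ x, W q x * f (Function.update x i true) := by
    have hc : ∑ x, W q x * (if x i then f (Function.update x i true) else 0)
        = q i * ∑ x, W q x * (if True then f (Function.update x i true) else 0)
          + (1 - q i) * ∑ x, W q x * (if False then f (Function.update x i true) else 0) := by
      have h := condX q i (fun b x => if b then f (Function.update x i true) else 0)
        (fun b x c => by
          show (if b then f (Function.update (Function.update x i c) i true) else 0) = _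
          simp only [Function.update_idem])
      simpa using h
    have hL : (∑ x, W q x * (if x i then f x else 0))
        = ∑ x, W q x * (if x i then f (Function.update x i true) else 0) := by
      refine Finset.sum_congr rfl fun x _ => ?_
      congr 1
      by_cases hb : x i
      · rw [if_pos hb, if_pos hb, ← hb, Function.update_eq_self]
      · rw [if_neg hb, if_neg hb]
    rw [hL, hc]
    simp
  have h3 : Ex q f = q i * ∑ x, W q x * f (Function.update x i true)
      + (1 - q i) * ∑ x, W q x * f (Function.update x i false) := by
    have hc := condX q i (fun b x => f (Function.update x i b))
      (fun b x c => by
        show f (Function.update (Function.update x i c) i b) = _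
        simp only [Function.update_idem])
    have hL : Ex q f = ∑ x, W q x * f (Function.update x i (x i)) := by
      simp only [Ex]
      exact Finset.sum_congr rfl fun x _ => by rw [Function.update_eq_self]
    rw [hL, hc]
  have hsub : ∀ (c : ℝ), ∑ x, W q x *
        (c * (f (Function.update x i true) - f (Function.update x i false)))
      = c * ((∑ x, W q x * f (Function.update x i true))
          - ∑ x, W q x * f (Function.update x i false)) := by
    intro c
    rw [mul_sub, Finset.mul_sum, Finset.mul_sum, ← Finset.sum_sub_distrib]
    exact Finset.sum_congr rfl fun x _ => by ring
  rw [h1, h2, h3, hsub, hsub]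
  ring

end OSSSAux

/-! ### The bridge between the measure theory and the combinatorics -/

section Bridge

open OSSSAux

variable {I : Type*} [Fintype I] [DecidableEq I]

lemma bern_apply_true {p : ℝ≥0∞} : bern p {true} = p := by
  rw [bern, Measure.add_apply, Measure.smul_apply, Measure.smul_apply,
    Measure.dirac_apply' _ (Set.Finite.measurableSet (Set.toFinite _)),
    Measure.dirac_apply' _ (Set.Finite.measurableSet (Set.toFinite _))]
  simp

lemma bern_apply_false {p : ℝ≥0∞} : bern p {false} = 1 - p := by
  rw [bern, Measure.add_apply, Measure.smul_apply, Measure.smul_apply,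
    Measure.dirac_apply' _ (Set.Finite.measurableSet (Set.toFinite _)),
    Measure.dirac_apply' _ (Set.Finite.measurableSet (Set.toFinite _))]
  simp

instance bern_prob {p : ℝ≥0∞} [hp : Fact (p ≤ 1)] : IsProbabilityMeasure (bern p) := by
  constructor
  rw [bern, Measure.add_apply, Measure.smul_apply, Measure.smul_apply,
    Measure.dirac_apply' _ MeasurableSet.univ, Measure.dirac_apply' _ MeasurableSet.univ]
  simpa using add_tsub_cancel_of_le hp.out

lemma bern_prob' {p : ℝ≥0∞} (hp : p ≤ 1) : IsProbabilityMeasure (bern p) :=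
  @bern_prob p ⟨hp⟩

variable (p : I → ℝ≥0∞)

lemma pi_singleton (hp : ∀ i, p i ≤ 1) (x : I → Bool) :
    (Measure.pi fun i => bern (p i)) {x} = ∏ i, bern (p i) {x i} := by
  haveI : ∀ i, IsProbabilityMeasure (bern (p i)) := fun i => bern_prob' (hp i)
  have hx : ({x} : Set (I → Bool)) = Set.univ.pi (fun i => ({x i} : Set Bool)) := by
    ext y
    simp only [Set.mem_singleton_iff, Set.mem_pi, Set.mem_univ, forall_true_left,
      Set.mem_singleton_iff]
    exact ⟨fun h => by rw [h]; exact fun i => rfl, fun h => funext h⟩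
  rw [hx, Measure.pi_pi]

lemma toReal_singleton (hp : ∀ i, p i ≤ 1) (x : I → Bool) :
    ((Measure.pi fun i => bern (p i)) {x}).toReal = W (fun i => (p i).toReal) x := by
  rw [pi_singleton p hp, ENNReal.toReal_prod, W]
  refine Finset.prod_congr rfl fun i _ => ?_
  cases hb : x i
  · rw [if_neg (by simp), bern_apply_false,
      ENNReal.toReal_sub_of_le (hp i) (by simp)]
    simp
  · rw [if_pos rfl, bern_apply_true]

lemma integral_eq_sum (hp : ∀ i, p i ≤ 1) (g : (I → Bool) → ℝ) :
    ∫ x, g x ∂(Measure.pi fun i => bern (p i)) = ∑ x, W (fun i => (p i).toReal) x * g x := by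
  haveI : ∀ i, IsProbabilityMeasure (bern (p i)) := fun i => bern_prob' (hp i)
  haveI : IsProbabilityMeasure (Measure.pi fun i => bern (p i)) := by infer_instance
  rw [integral_fintype (Integrable.of_finite)]
  refine Finset.sum_congr rfl fun x _ => ?_
  rw [measureReal_def, toReal_singleton p hp, smul_eq_mul]

open Classical in
lemma measure_eq_sum (hp : ∀ i, p i ≤ 1) (S : Set (I → Bool)) :
    ((Measure.pi fun i => bern (p i)) S).toReal
      = ∑ x, W (fun i => (p i).toReal) x * (if x ∈ S then 1 else 0) := by
  haveI : ∀ i, IsProbabilityMeasure (bern (p i)) := fun i => bern_prob' (hp i)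
  haveI : IsProbabilityMeasure (Measure.pi fun i => bern (p i)) := by infer_instance
  rw [← measureReal_def, ← MeasureTheory.integral_indicator_one (Set.Finite.measurableSet (Set.toFinite S))]
  rw [integral_eq_sum p hp (fun x => S.indicator 1 x)]
  refine Finset.sum_congr rfl fun x _ => ?_
  by_cases hx : x ∈ S
  · rw [Set.indicator_of_mem hx, if_pos hx, Pi.one_apply]
  · rw [Set.indicator_of_notMem hx, if_neg hx]

end Bridge

/-- The monotone OSSS inequality on `{0,1}^I` with a product of Bernoulli
measures: if a decision tree `T` computes a nondecreasing `f` with values in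
`[0,1]`, then `Var(f) ≤ 2 Σ_i δ_i(T)·Cov(ω_i, f)`. -/
theorem osss_monotone {I : Type*} [Fintype I] [DecidableEq I]
    (p : I → ℝ≥0∞) (hp : ∀ i, p i ≤ 1)
    (f : (I → Bool) → ℝ) (hmono : Monotone f)
    (hf01 : ∀ ω, f ω ∈ Set.Icc (0 : ℝ) 1)
    (T : DTree I (fun _ => Bool) ℝ) (hT : ∀ ω, T.eval ω = f ω) :
    (∫ ω, (f ω - ∫ ω', f ω' ∂(Measure.pi fun i => bern (p i))) ^ 2
        ∂(Measure.pi fun i => bern (p i))) ≤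
      2 * ∑ i : I, ((Measure.pi fun i => bern (p i)) {ω | i ∈ T.revealed ω}).toReal *
        ((∫ ω, (if ω i then f ω else 0) ∂(Measure.pi fun i => bern (p i))) -
          ((Measure.pi fun i => bern (p i)) {ω | ω i = true}).toReal *
            ∫ ω, f ω ∂(Measure.pi fun i => bern (p i))) := by
  classical
  set q : I → ℝ := fun i => (p i).toReal with hq
  have hq0 : ∀ i, 0 ≤ q i := fun i => ENNReal.toReal_nonneg
  have hq1 : ∀ i, q i ≤ 1 := fun i => by
    rw [hq]
    calc (p i).toReal ≤ (1 : ℝ≥0∞).toReal :=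
      ENNReal.toReal_mono (by simp) (hp i)
    _ = 1 := by simp
  have hint : ∀ g : (I → Bool) → ℝ,
      ∫ x, g x ∂(Measure.pi fun i => bern (p i)) = ∑ x, OSSSAux.W q x * g x :=
    integral_eq_sum p hp
  have hmeas : ∀ S : Set (I → Bool),
      ((Measure.pi fun i => bern (p i)) S).toReal
        = ∑ x, OSSSAux.W q x * (if x ∈ S then 1 else 0) :=
    measure_eq_sum p hp
  -- the LHS is the combinatorial variance
  have hLHS : (∫ ω, (f ω - ∫ ω', f ω' ∂(Measure.pi fun i => bern (p i))) ^ 2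
        ∂(Measure.pi fun i => bern (p i)))
      = OSSSAux.Ex q (fun x => (f x - OSSSAux.Ex q f) ^ 2) := by
    rw [hint (fun ω => (f ω - ∫ ω', f ω' ∂(Measure.pi fun i => bern (p i))) ^ 2)]
    rw [hint f]
    rfl
  -- revealments
  have hdl : ∀ i : I, ((Measure.pi fun i => bern (p i)) {ω | i ∈ T.revealed ω}).toReal
      = OSSSAux.dl q T i := by
    intro i
    rw [hmeas {ω | i ∈ T.revealed ω}, OSSSAux.dl]
    refine Finset.sum_congr rfl fun x _ => ?_
    congr 1
    have : x ∈ {ω | i ∈ T.revealed ω} ↔ i ∈ OSSSAux.revF T x := by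
      rw [Set.mem_setOf_eq, OSSSAux.mem_revF]
    exact if_congr this rfl rfl
  -- marginal probability
  have hmarg : ∀ i : I, ((Measure.pi fun i => bern (p i)) {ω | ω i = true}).toReal = q i := by
    intro i
    rw [hmeas {ω | ω i = true}]
    have h := OSSSAux.sum_coord q i (fun b => if b = true then (1:ℝ) else 0)
    norm_num at h
    have key : ∑ x, OSSSAux.W q x * (if x i = true then (1:ℝ) else 0) = q i := by
      simp only [mul_ite, mul_one, mul_zero]
      exact h
    refine Eq.trans (Finset.sum_congr rfl fun x _ => ?_) key
    congr 1
    by_cases hx : x i = true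
    · rw [if_pos (show x ∈ {ω | ω i = true} from hx), if_pos hx]
    · rw [if_neg (show x ∉ {ω | ω i = true} from hx), if_neg hx]
  -- variance bound from the combinatorial lemmas
  have hTf : T.eval = f := funext hT
  have hf1 : ∀ x, |f x| ≤ 1 := fun x => by
    have h := hf01 x
    rw [Set.mem_Icc] at h
    rw [abs_le]; constructor <;> linarith [h.1, h.2]
  have hvar := OSSSAux.varLem hq0 hq1 T f hTf hf1
  have hcov := fun i => OSSSAux.infl_eq_two_cov (q := q) f hmono i
  rw [hLHS]
  refine hvar.trans (le_of_eq ?_)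
  rw [Finset.mul_sum]
  refine Finset.sum_congr rfl fun i _ => ?_
  rw [hdl i, hmarg i, hcov i, hint (fun ω => if ω i then f ω else 0), hint f]
  show OSSSAux.dl q T i * (2 * ((∑ x, OSSSAux.W q x * (if x i then f x else 0))
      - q i * OSSSAux.Ex q f)) = _
  rw [OSSSAux.Ex]
  ring
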